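/- arXiv:2002.07758 — 2 statements merged into one kernel-verified Lean document; each statement's English description precedes it below -/
import Mathlib

section
/- For every $r \in \mathbb{N}$ and $d \ge 1$, the following combinatorial identity holds: $\sum_{k \in \mathbb{N}_0^d, \|k\|_1 \le r} \prod_{i=1}^{d+1} \binom{2k_i}{k_i} = \binom{r + \frac{d-1}{2}}{r} 4^r$, where $k_{d+1} := r - \|k\|_1$ and the generalized binomial coefficient is interpreted via the Gamma function as $\binom{r + (d-1)/2}{r} = \frac{\Gamma(r + (d+1)/2)}{\Gamma(r+1)\Gamma((d+1)/2)}$. -/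
open MeasureTheory Finset

/-- The d-dimensional unit simplex. -/
def simplexSet (d : ℕ) : Set (Fin d → ℝ) :=
  {x | (∀ i, 0 ≤ x i ∧ x i ≤ 1) ∧ ∑ i, x i ≤ 1}

/-- The lattice points of the discrete simplex `ℕ₀^d ∩ mS`. -/
def grid (d m : ℕ) : Finset (Fin d → ℕ) :=
  (Finset.Icc 0 (fun _ => m)).filter (fun k => ∑ i, k i ≤ m)

/-- Multinomial(m, x) probability mass at k. -/
noncomputable def Pw (d m : ℕ) (k : Fin d → ℕ) (x : Fin d → ℝ) : ℝ :=
  ((m.factorial : ℝ) / ((m - ∑ i, k i).factorial * ∏ i, (k i).factorial)) *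
    (1 - ∑ i, x i) ^ (m - ∑ i, k i) * ∏ i, x i ^ k i

/-- Rising factorial divided by factorial: `binom(x+n-1, n)`. -/
noncomputable def Pq (n : ℕ) (x : ℝ) : ℝ := (∏ i ∈ Finset.range n, (x + i)) / n.factorial

lemma Pq_zero (x : ℝ) : Pq 0 x = 1 := by simp [Pq]

lemma Pq_succ (n : ℕ) (x : ℝ) :
    ((n : ℝ) + 1) * Pq (n + 1) x = Pq n x * (x + n) := by
  simp only [Pq, Finset.prod_range_succ, Nat.factorial_succ]
  push_cast
  field_simp

lemma Pq_succ_left (n : ℕ) (x : ℝ) :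
    ((n : ℝ) + 1) * Pq (n + 1) x = x * Pq n (x + 1) := by
  have h : ∏ i ∈ Finset.range (n + 1), (x + (i : ℝ)) =
      x * ∏ i ∈ Finset.range n, (x + 1 + (i : ℝ)) := by
    rw [Finset.prod_range_succ']
    have : ∀ i ∈ Finset.range n, (x + ((i : ℕ) + 1 : ℕ)) = x + 1 + (i : ℝ) := by
      intro i _; push_cast; ring
    rw [Finset.prod_congr rfl this]
    push_cast
    ring
  simp only [Pq, Nat.factorial_succ, h]
  push_cast
  field_simp

lemma vand (r : ℕ) : ∀ x y : ℝ,
    ∑ j ∈ Finset.range (r + 1), Pq j x * Pq (r - j) y = Pq r (x + y) := by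
  induction r with
  | zero => intro x y; simp [Pq]
  | succ r ih =>
    intro x y
    have hr : ((r : ℝ) + 1) ≠ 0 := by positivity
    apply mul_left_cancel₀ hr
    rw [Finset.mul_sum]
    have split : ∀ j ∈ Finset.range (r + 2),
        ((r : ℝ) + 1) * (Pq j x * Pq (r + 1 - j) y) =
          (j : ℝ) * Pq j x * Pq (r + 1 - j) y +
          ((r + 1 - j : ℕ) : ℝ) * Pq (r + 1 - j) y * Pq j x := by
      intro j hj
      have hj' : j ≤ r + 1 := by simpa [Nat.lt_succ_iff] using hj
      have : ((r : ℝ) + 1) = (j : ℝ) + ((r + 1 - j : ℕ) : ℝ) := by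
        have : j + (r + 1 - j) = r + 1 := by omega
        push_cast [Nat.cast_sub hj']
        ring
      rw [this]; ring
    rw [Finset.sum_congr rfl split, Finset.sum_add_distrib]
    have hA : ∑ j ∈ Finset.range (r + 2),
        (j : ℝ) * Pq j x * Pq (r + 1 - j) y = x * Pq r (x + 1 + y) := by
      rw [Finset.sum_range_succ']
      simp only [Nat.cast_zero, zero_mul, add_zero]
      have : ∀ i ∈ Finset.range (r + 1),
          ((i : ℕ) + 1 : ℕ) * Pq (i + 1) x * Pq (r + 1 - (i + 1)) y =
            x * (Pq i (x + 1) * Pq (r - i) y) := by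
        intro i _
        have h1 : (((i : ℕ) + 1 : ℕ) : ℝ) = (i : ℝ) + 1 := by push_cast; ring
        have h2 : r + 1 - (i + 1) = r - i := by omega
        rw [h1, h2, ← mul_assoc, Pq_succ_left]
      rw [Finset.sum_congr rfl this, ← Finset.mul_sum, ih]
    have hB : ∑ j ∈ Finset.range (r + 2),
        ((r + 1 - j : ℕ) : ℝ) * Pq (r + 1 - j) y * Pq j x = y * Pq r (x + (y + 1)) := by
      rw [Finset.sum_range_succ]
      simp only [Nat.sub_self, Nat.cast_zero, zero_mul, add_zero]
      have : ∀ j ∈ Finset.range (r + 1),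
          ((r + 1 - j : ℕ) : ℝ) * Pq (r + 1 - j) y * Pq j x =
            y * (Pq j x * Pq (r - j) (y + 1)) := by
        intro j hj
        have hj' : j ≤ r := by simpa [Nat.lt_succ_iff] using hj
        have h2 : r + 1 - j = (r - j) + 1 := by omega
        rw [h2]
        have h3 : (((r - j) + 1 : ℕ) : ℝ) = ((r - j : ℕ) : ℝ) + 1 := by push_cast; ring
        rw [h3, Pq_succ_left]
        ring
      rw [Finset.sum_congr rfl this, ← Finset.mul_sum, ih]
    rw [hA, hB]
    have := Pq_succ_left r (x + y)
    have hxy : x * Pq r (x + 1 + y) + y * Pq r (x + (y + 1)) =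
        (x + y) * Pq r (x + y + 1) := by
      have e1 : x + 1 + y = x + y + 1 := by ring
      have e2 : x + (y + 1) = x + y + 1 := by ring
      rw [e1, e2]; ring
    rw [hxy, ← this]

lemma choose_eq_Pq (n : ℕ) : ((Nat.choose (2 * n) n : ℕ) : ℝ) = 4 ^ n * Pq n (1 / 2) := by
  induction n with
  | zero => simp [Pq]
  | succ n ih =>
    have key := Nat.succ_mul_centralBinom_succ n
    have keyR : ((n : ℝ) + 1) * ((Nat.choose (2 * (n + 1)) (n + 1) : ℕ) : ℝ) =
        2 * (2 * n + 1) * ((Nat.choose (2 * n) n : ℕ) : ℝ) := by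
      have := congrArg (Nat.cast : ℕ → ℝ) key
      push_cast [Nat.centralBinom] at this
      push_cast
      linarith
    have hp := Pq_succ n (1 / 2)
    have hr : ((n : ℝ) + 1) ≠ 0 := by positivity
    apply mul_left_cancel₀ hr
    rw [keyR, ih]
    have : ((n : ℝ) + 1) * (4 ^ (n + 1) * Pq (n + 1) (1 / 2)) =
        4 ^ (n + 1) * (((n : ℝ) + 1) * Pq (n + 1) (1 / 2)) := by ring
    rw [this, hp]
    ring

lemma mem_grid {d m : ℕ} {k : Fin d → ℕ} : k ∈ grid d m ↔ ∑ i, k i ≤ m := by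
  simp only [grid, Finset.mem_filter, Finset.mem_Icc, and_iff_right_iff_imp]
  intro h
  constructor
  · exact fun i => Nat.zero_le _
  · intro i
    exact le_trans (Finset.single_le_sum (f := k) (fun j _ => Nat.zero_le _)
      (Finset.mem_univ i)) h

lemma grid_succ_sum (d m : ℕ) (f : (Fin (d + 1) → ℕ) → ℝ) :
    ∑ k ∈ grid (d + 1) m, f k =
      ∑ j ∈ Finset.range (m + 1), ∑ k ∈ grid d (m - j), f (Fin.cons j k) := by
  have h1 : ∑ k ∈ grid (d + 1) m, f k =
      ∑ p ∈ (Finset.range (m + 1)).sigma (fun j => grid d (m - j)),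
        f (Fin.cons p.1 p.2) := by
    apply Finset.sum_nbij' (i := fun k => (⟨k 0, Fin.tail k⟩ : Σ _ : ℕ, Fin d → ℕ))
      (j := fun p => Fin.cons p.1 p.2)
    · intro k hk
      simp only [mem_grid] at hk
      have h0 : k 0 + ∑ i, Fin.tail k i = ∑ i, k i := by
        rw [← Fin.sum_cons (k 0) (Fin.tail k), Fin.cons_self_tail]
      simp only [Finset.mem_sigma, Finset.mem_range, Nat.lt_succ_iff, mem_grid]
      omega
    · intro p hp
      simp only [Finset.mem_sigma, Finset.mem_range, Nat.lt_succ_iff, mem_grid] at hp ⊢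
      rw [Fin.sum_cons]
      omega
    · intro k _; exact Fin.cons_self_tail k
    · intro p _; exact Sigma.ext (by simp) (by simp [Fin.tail_cons])
    · intro k _; rw [Fin.cons_self_tail]
  rw [h1, Finset.sum_sigma]

lemma grid_zero (r : ℕ) : grid 0 r = {![]} := by
  ext k
  simp only [mem_grid, Finset.mem_singleton]
  constructor
  · intro _; exact Subsingleton.elim _ _
  · intro _; simp

lemma main_sum (d : ℕ) : ∀ r : ℕ,
    (∑ k ∈ grid d r,
      ((∏ i, Nat.choose (2 * k i) (k i)) *
        Nat.choose (2 * (r - ∑ i, k i)) (r - ∑ i, k i) : ℕ) : ℝ) =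
      4 ^ r * Pq r (((d : ℝ) + 1) / 2) := by
  induction d with
  | zero =>
    intro r
    rw [grid_zero]
    simp only [Finset.sum_singleton]
    have h0 : (∑ i : Fin 0, (![] : Fin 0 → ℕ) i) = 0 := by simp
    rw [h0]
    simp only [Finset.univ_eq_empty, Finset.prod_empty, one_mul, Nat.sub_zero]
    rw [choose_eq_Pq]
    norm_num
  | succ d ih =>
    intro r
    rw [grid_succ_sum d r (fun k => (((∏ i, Nat.choose (2 * k i) (k i)) *
        Nat.choose (2 * (r - ∑ i, k i)) (r - ∑ i, k i) : ℕ) : ℝ))]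
    have step : ∀ j ∈ Finset.range (r + 1),
        (∑ k ∈ grid d (r - j), (((∏ i, Nat.choose (2 * (Fin.cons j k : Fin (d+1) → ℕ) i)
            ((Fin.cons j k : Fin (d+1) → ℕ) i)) *
          Nat.choose (2 * (r - ∑ i, (Fin.cons j k : Fin (d+1) → ℕ) i))
            (r - ∑ i, (Fin.cons j k : Fin (d+1) → ℕ) i) : ℕ) : ℝ)) =
        4 ^ r * (Pq j (1 / 2) * Pq (r - j) (((d : ℝ) + 1) / 2)) := by
      intro j hj
      have hj' : j ≤ r := by simpa [Nat.lt_succ_iff] using hj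
      have hstep1 : ∀ k ∈ grid d (r - j),
          (((∏ i, Nat.choose (2 * (Fin.cons j k : Fin (d+1) → ℕ) i)
              ((Fin.cons j k : Fin (d+1) → ℕ) i)) *
            Nat.choose (2 * (r - ∑ i, (Fin.cons j k : Fin (d+1) → ℕ) i))
              (r - ∑ i, (Fin.cons j k : Fin (d+1) → ℕ) i) : ℕ) : ℝ) =
          ((Nat.choose (2 * j) j : ℕ) : ℝ) *
            (((∏ i, Nat.choose (2 * k i) (k i)) *
              Nat.choose (2 * ((r - j) - ∑ i, k i)) ((r - j) - ∑ i, k i) : ℕ) : ℝ) := by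
        intro k hk
        have hk' : ∑ i, k i ≤ r - j := mem_grid.mp hk
        have h2 : r - (j + ∑ i, k i) = (r - j) - ∑ i, k i := by omega
        simp only [Fin.prod_univ_succ, Fin.sum_univ_succ, Fin.cons_zero, Fin.cons_succ]
        rw [h2]
        push_cast
        ring
      rw [Finset.sum_congr rfl hstep1, ← Finset.mul_sum]
      have ihrj := ih (r - j)
      rw [ihrj, choose_eq_Pq]
      have h4 : (4 : ℝ) ^ j * (4 : ℝ) ^ (r - j) = 4 ^ r := by
        rw [← pow_add]; congr 1; omega
      calc 4 ^ j * Pq j (1 / 2) * (4 ^ (r - j) * Pq (r - j) (((d : ℝ) + 1) / 2))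
          = (4 : ℝ) ^ j * 4 ^ (r - j) * (Pq j (1 / 2) * Pq (r - j) (((d : ℝ) + 1) / 2)) := by
            ring
        _ = 4 ^ r * (Pq j (1 / 2) * Pq (r - j) (((d : ℝ) + 1) / 2)) := by rw [h4]
    rw [Finset.sum_congr rfl step, ← Finset.mul_sum, vand]
    congr 1
    push_cast
    ring

lemma Gamma_ratio (c : ℝ) (hc : 0 < c) (r : ℕ) :
    Real.Gamma (r + c) / (Real.Gamma (r + 1) * Real.Gamma c) = Pq r c := by
  have hgam : ∀ n : ℕ, Real.Gamma (n + c) = Real.Gamma c * ∏ i ∈ Finset.range n, (c + i) := by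
    intro n
    induction n with
    | zero => simp
    | succ n ihn =>
      have hne : (n : ℝ) + c ≠ 0 := by positivity
      have : ((n : ℕ) + 1 : ℝ) + c = ((n : ℝ) + c) + 1 := by push_cast; ring
      rw [show ((n + 1 : ℕ) : ℝ) + c = ((n : ℝ) + c) + 1 by push_cast; ring,
        Real.Gamma_add_one hne, ihn, Finset.prod_range_succ]
      ring
  rw [hgam r, Real.Gamma_nat_eq_factorial, Pq]
  have h1 : Real.Gamma c ≠ 0 := ne_of_gt (Real.Gamma_pos_of_pos hc)
  have h2 : (r.factorial : ℝ) ≠ 0 := by positivity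
  field_simp

/-- Chu–Vandermonde type identity for central binomial coefficients over the
discrete simplex, with `k_{d+1} = r - ‖k‖₁` and the generalized binomial
coefficient interpreted via the Gamma function. -/
theorem central_binomial_simplex_sum (d r : ℕ) (hd : 1 ≤ d) :
    (∑ k ∈ grid d r,
      ((∏ i, Nat.choose (2 * k i) (k i)) *
        Nat.choose (2 * (r - ∑ i, k i)) (r - ∑ i, k i) : ℕ) : ℝ) =
      Real.Gamma (r + (d + 1) / 2) /
        (Real.Gamma (r + 1) * Real.Gamma ((d + 1) / 2)) * 4 ^ r := by
  have hc : (0 : ℝ) < ((d : ℝ) + 1) / 2 := by positivity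
  rw [Gamma_ratio (((d : ℝ) + 1) / 2) hc r, main_sum d r]
  ring
end

section
/- Bernstein polynomial approximation with second-order rate on the simplex: if $F: \mathcal{S} \to \mathbb{R}$ is twice continuously differentiable on the $d$-dimensional simplex $\mathcal{S}$, then uniformly for $x \in \mathcal{S}$, $F_m^\star(x) = F(x) + m^{-1} B(x) + o(m^{-1})$ as $m \to \infty$, where $F_m^\star(x) = \sum_{k \in \mathbb{N}_0^d \cap m\mathcal{S}} F(k/m) P_{k,m}(x)$ and $B(x) = \frac{1}{2}\sum_{i,j=1}^d (x_i \mathbf{1}_{\{i=j\}} - x_i x_j) \frac{\partial^2 F}{\partial x_i \partial x_j}(x)$. -/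
open MeasureTheory Finset

/-- Bernstein polynomial of order m for F on the simplex. -/
noncomputable def bernsteinPoly (d m : ℕ) (F : (Fin d → ℝ) → ℝ) (x : Fin d → ℝ) : ℝ :=
  ∑ k ∈ grid d m, F (fun i => (k i : ℝ) / m) * Pw d m k x

/-- Second partial derivative ∂²F/∂xᵢ∂xⱼ. -/
noncomputable def secondPartial (d : ℕ) (F : (Fin d → ℝ) → ℝ) (i j : Fin d)
    (x : Fin d → ℝ) : ℝ :=
  fderiv ℝ (fun y => fderiv ℝ F y (Pi.single j 1)) x (Pi.single i 1)

/-- The bias functional B(x). -/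
noncomputable def biasB (d : ℕ) (F : (Fin d → ℝ) → ℝ) (x : Fin d → ℝ) : ℝ :=
  (1 / 2) * ∑ i, ∑ j,
    (x i * (if i = j then 1 else 0) - x i * x j) * secondPartial d F i j x

lemma Pw_nonneg {d m : ℕ} {k : Fin d → ℕ} {x : Fin d → ℝ} (hx : x ∈ simplexSet d) :
    0 ≤ Pw d m k x := by
  obtain ⟨h1, h2⟩ := hx
  have ht : 0 ≤ 1 - ∑ i, x i := by linarith
  apply mul_nonneg
  apply mul_nonneg
  · positivity
  · positivity
  · exact Finset.prod_nonneg fun i _ => pow_nonneg (h1 i).1 _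

lemma step_t {d n : ℕ} {k : Fin d → ℕ} (hk : ∑ i, k i ≤ n) (x : Fin d → ℝ) :
    ((n : ℝ) + 1 - ∑ i, k i) * Pw d (n+1) k x
      = (n+1) * (1 - ∑ i, x i) * Pw d n k x := by
  unfold Pw
  have h1 : (n+1) - ∑ i, k i = (n - ∑ i, k i) + 1 := by omega
  rw [h1]
  set s := ∑ i, k i with hs
  set P : ℝ := ↑(∏ i, (k i).factorial) with hP
  set Q : ℝ := ↑((n - s).factorial) with hQ
  set t : ℝ := 1 - ∑ i, x i with ht
  set X : ℝ := ∏ i, x i ^ k i with hX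
  have hsn : (s:ℝ) ≤ n := by exact_mod_cast hk
  have hA : (((n+1)).factorial : ℝ) = ((n:ℝ)+1) * n.factorial := by
    exact_mod_cast Nat.factorial_succ n
  have hB : (((n-s)+1).factorial : ℝ) = ((n:ℝ) - s + 1) * Q := by
    rw [Nat.factorial_succ, hQ]
    push_cast [Nat.cast_sub hk]
    ring
  rw [hA, hB, pow_succ]
  have hc : ((n:ℝ) - s + 1) ≠ 0 := by nlinarith
  have hQ0 : Q ≠ 0 := by rw [hQ]; exact_mod_cast (Nat.factorial_pos _).ne'
  have hP0 : P ≠ 0 := by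
    rw [hP]
    have : 0 < ∏ i, (k i).factorial := Finset.prod_pos fun i _ => Nat.factorial_pos _
    exact_mod_cast this.ne'
  field_simp
  ring

lemma step_i {d n : ℕ} {k : Fin d → ℕ} (hk : ∑ i, k i ≤ n) (i : Fin d) (x : Fin d → ℝ) :
    ((k i : ℝ) + 1) * Pw d (n+1) (Function.update k i (k i + 1)) x
      = (n+1) * x i * Pw d n k x := by
  unfold Pw
  have hsum : ∑ j, Function.update k i (k i + 1) j = (∑ j, k j) + 1 := by
    rw [Finset.sum_update_of_mem (Finset.mem_univ i), Finset.sdiff_singleton_eq_erase]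
    rw [← Finset.add_sum_erase _ k (Finset.mem_univ i)]
    ring
  rw [hsum]
  have h1 : (n+1) - ((∑ j, k j) + 1) = n - ∑ j, k j := by omega
  rw [h1]
  have hprodf : (∏ j, ((Function.update k i (k i + 1)) j).factorial)
      = (k i + 1).factorial * ∏ j ∈ Finset.univ.erase i, (k j).factorial := by
    have he : (fun j => ((Function.update k i (k i + 1)) j).factorial)
        = Function.update (fun j => (k j).factorial) i ((k i + 1).factorial) :=
      funext fun j => Function.apply_update (fun _ v => v.factorial) k i _ j
    rw [show (∏ j, ((Function.update k i (k i + 1)) j).factorial)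
        = ∏ j, (Function.update (fun j => (k j).factorial) i ((k i + 1).factorial)) j from by
      rw [← he], Finset.prod_update_of_mem (Finset.mem_univ i), Finset.sdiff_singleton_eq_erase]
  have hprodf2 : (∏ j, (k j).factorial)
      = (k i).factorial * ∏ j ∈ Finset.univ.erase i, (k j).factorial :=
    (Finset.mul_prod_erase _ _ (Finset.mem_univ i)).symm
  have hprodx : (∏ j, x j ^ (Function.update k i (k i + 1)) j)
      = x i ^ (k i + 1) * ∏ j ∈ Finset.univ.erase i, x j ^ k j := by
    have he : (fun j => x j ^ (Function.update k i (k i + 1)) j)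
        = Function.update (fun j => x j ^ k j) i (x i ^ (k i + 1)) :=
      funext fun j => Function.apply_update (fun j v => x j ^ v) k i _ j
    rw [show (∏ j, x j ^ (Function.update k i (k i + 1)) j)
        = ∏ j, (Function.update (fun j => x j ^ k j) i (x i ^ (k i + 1))) j from by
      rw [← he], Finset.prod_update_of_mem (Finset.mem_univ i), Finset.sdiff_singleton_eq_erase]
  have hprodx2 : (∏ j, x j ^ k j)
      = x i ^ (k i) * ∏ j ∈ Finset.univ.erase i, x j ^ k j :=
    (Finset.mul_prod_erase _ _ (Finset.mem_univ i)).symm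
  rw [hprodf, hprodf2, hprodx, hprodx2]
  set Q : ℝ := ↑((n - ∑ j, k j).factorial) with hQ
  set Pe : ℝ := ↑(∏ j ∈ Finset.univ.erase i, (k j).factorial) with hPe
  set t : ℝ := 1 - ∑ j, x j with ht
  set Xe : ℝ := ∏ j ∈ Finset.univ.erase i, x j ^ k j with hXe
  have hA : (((n+1)).factorial : ℝ) = ((n:ℝ)+1) * n.factorial := by
    exact_mod_cast Nat.factorial_succ n
  have hC : (((k i + 1).factorial * ∏ j ∈ Finset.univ.erase i, (k j).factorial : ℕ) : ℝ)
      = (((k i):ℝ)+1) * ((k i).factorial : ℝ) * Pe := by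
    rw [hPe]; push_cast [Nat.factorial_succ]; ring
  have hD : (((k i).factorial * ∏ j ∈ Finset.univ.erase i, (k j).factorial : ℕ) : ℝ)
      = ((k i).factorial : ℝ) * Pe := by
    rw [hPe]; push_cast; ring
  rw [hA, hC, hD, pow_succ]
  have hk0 : ((k i : ℝ)) + 1 ≠ 0 := by positivity
  have hkf : ((k i).factorial : ℝ) ≠ 0 := by exact_mod_cast (Nat.factorial_pos _).ne'
  have hQ0 : Q ≠ 0 := by rw [hQ]; exact_mod_cast (Nat.factorial_pos _).ne'
  have hPe0 : Pe ≠ 0 := by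
    rw [hPe]
    have : 0 < ∏ j ∈ Finset.univ.erase i, (k j).factorial :=
      Finset.prod_pos fun j _ => Nat.factorial_pos _
    exact_mod_cast this.ne'
  field_simp

lemma sum_update_add {d : ℕ} (k : Fin d → ℕ) (i : Fin d) :
    ∑ j, Function.update k i (k i + 1) j = (∑ j, k j) + 1 := by
  rw [Finset.sum_update_of_mem (Finset.mem_univ i), Finset.sdiff_singleton_eq_erase,
    ← Finset.add_sum_erase _ k (Finset.mem_univ i)]
  omega

lemma sum_update_sub {d : ℕ} (k : Fin d → ℕ) (i : Fin d) (hi : 0 < k i) :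
    ∑ j, Function.update k i (k i - 1) j = (∑ j, k j) - 1 := by
  rw [Finset.sum_update_of_mem (Finset.mem_univ i), Finset.sdiff_singleton_eq_erase,
    ← Finset.add_sum_erase _ k (Finset.mem_univ i)]
  omega

lemma update_down_up {d : ℕ} (k : Fin d → ℕ) (i : Fin d) (hi : 0 < k i) :
    Function.update (Function.update k i (k i - 1)) i
      ((Function.update k i (k i - 1)) i + 1) = k := by
  funext j
  by_cases hj : j = i
  · subst hj; simp [Function.update]; omega
  · simp [Function.update, hj]

lemma update_up_down {d : ℕ} (k : Fin d → ℕ) (i : Fin d) :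
    Function.update (Function.update k i (k i + 1)) i
      ((Function.update k i (k i + 1)) i - 1) = k := by
  funext j
  by_cases hj : j = i
  · subst hj; simp [Function.update]
  · simp [Function.update, hj]

lemma sum_step_t {d n : ℕ} (x : Fin d → ℝ) :
    ∑ k ∈ grid d (n+1), ((n : ℝ) + 1 - ∑ i, k i) * Pw d (n+1) k x
      = (n+1) * (1 - ∑ i, x i) * ∑ k ∈ grid d n, Pw d n k x := by
  have hsub : grid d n ⊆ grid d (n+1) := by
    intro k hk; exact mem_grid.mpr (le_trans (mem_grid.mp hk) (Nat.le_succ n))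
  rw [← Finset.sum_subset hsub]
  · rw [Finset.mul_sum]
    apply Finset.sum_congr rfl
    intro k hk
    exact step_t (mem_grid.mp hk) x
  · intro k hk hnk
    have h1 : ∑ i, k i = n + 1 := by
      have := mem_grid.mp hk
      have h2 : ¬ (∑ i, k i ≤ n) := fun h => hnk (mem_grid.mpr h)
      omega
    have : ((n : ℝ) + 1 - ∑ i, k i) = 0 := by rw [h1]; push_cast; ring
    rw [this, zero_mul]

lemma sum_step_i {d n : ℕ} (i : Fin d) (x : Fin d → ℝ) (G : (Fin d → ℕ) → ℝ) :
    ∑ k ∈ grid d (n+1), (k i : ℝ) * G k * Pw d (n+1) k x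
      = (n+1) * x i * ∑ k ∈ grid d n, G (Function.update k i (k i + 1)) * Pw d n k x := by
  rw [← Finset.sum_filter_of_ne (p := fun k => 0 < k i)
    (fun k _ hne => by
      by_contra h
      have : k i = 0 := by omega
      simp [this] at hne)]
  rw [Finset.mul_sum]
  refine Finset.sum_bij' (i := fun k _ => Function.update k i (k i - 1))
    (j := fun k _ => Function.update k i (k i + 1)) (hi := ?_) (hj := ?_) ?_ ?_ ?_
  · intro k hk
    obtain ⟨hk1, hk2⟩ := Finset.mem_filter.mp hk
    have hs := mem_grid.mp hk1
    have h2 := sum_update_sub k i hk2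
    refine mem_grid.mpr ?_
    show ∑ j, Function.update k i (k i - 1) j ≤ n
    omega
  · intro k hk
    have hs := mem_grid.mp hk
    have h2 := sum_update_add k i
    refine Finset.mem_filter.mpr ⟨mem_grid.mpr ?_, ?_⟩
    · show ∑ j, Function.update k i (k i + 1) j ≤ n + 1
      omega
    · show 0 < Function.update k i (k i + 1) i
      simp
  · intro k hk
    exact update_down_up k i (Finset.mem_filter.mp hk).2
  · intro k hk
    exact update_up_down k i
  · intro k hk
    obtain ⟨hk1, hk2⟩ := Finset.mem_filter.mp hk
    have hs' : ∑ j, Function.update k i (k i - 1) j ≤ n := by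
      have hs := mem_grid.mp hk1
      have := sum_update_sub k i hk2
      omega
    have hstep := step_i (d := d) (n := n) hs' i x
    rw [update_down_up k i hk2] at hstep
    have hki : ((Function.update k i (k i - 1)) i : ℝ) + 1 = (k i : ℝ) := by
      simp only [Function.update_self]
      have : k i - 1 + 1 = k i := by omega
      exact_mod_cast congrArg (Nat.cast (R := ℝ)) this
    rw [hki] at hstep
    calc (k i : ℝ) * G k * Pw d (n+1) k x = G k * ((k i : ℝ) * Pw d (n+1) k x) := by ring
    _ = G k * ((n+1) * x i * Pw d n (Function.update k i (k i - 1)) x) := by rw [hstep]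
    _ = (n+1) * x i * (G (Function.update (Function.update k i (k i - 1)) i
          ((Function.update k i (k i - 1)) i + 1)) * Pw d n (Function.update k i (k i - 1)) x) := by
        rw [update_down_up k i hk2]; ring

lemma grid_zero_s15 {d : ℕ} : grid d 0 = {fun _ => 0} := by
  ext k
  simp [mem_grid, Finset.sum_eq_zero_iff, funext_iff]

lemma Pw_zero {d : ℕ} (x : Fin d → ℝ) : Pw d 0 (fun _ => 0) x = 1 := by
  simp [Pw]

lemma sum_Pw {d : ℕ} : ∀ (m : ℕ) {x : Fin d → ℝ}, x ∈ simplexSet d →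
    ∑ k ∈ grid d m, Pw d m k x = 1 := by
  intro m
  induction m with
  | zero => intro x hx; rw [grid_zero_s15, Finset.sum_singleton, Pw_zero]
  | succ n ih =>
    intro x hx
    have hstep1 : ∀ i : Fin d, ∑ k ∈ grid d (n+1), (k i : ℝ) * Pw d (n+1) k x
        = (n+1) * x i * ∑ k ∈ grid d n, Pw d n k x := by
      intro i
      have h := sum_step_i (n := n) i x (fun _ => 1)
      simpa using h
    have key : ((n:ℝ)+1) * ∑ k ∈ grid d (n+1), Pw d (n+1) k x
        = ((n:ℝ)+1) * ∑ k ∈ grid d n, Pw d n k x := by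
      have h1 : ∑ k ∈ grid d (n+1), ((n:ℝ)+1) * Pw d (n+1) k x
          = ∑ k ∈ grid d (n+1), (((n:ℝ)+1 - ∑ i, k i) * Pw d (n+1) k x
              + ∑ i, (k i:ℝ) * Pw d (n+1) k x) := by
        apply Finset.sum_congr rfl
        intro k _
        have hc : ((∑ i, k i : ℕ):ℝ) = ∑ i, ((k i:ℕ):ℝ) := by push_cast; rfl
        rw [← Finset.sum_mul, ← hc]
        ring
      rw [Finset.mul_sum, h1, Finset.sum_add_distrib, sum_step_t, Finset.sum_comm]
      conv_lhs => rw [Finset.sum_congr rfl (fun i (_ : i ∈ Finset.univ) => hstep1 i)]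
      rw [← Finset.sum_mul]
      have : (∑ i, ((n:ℝ)+1) * x i) = ((n:ℝ)+1) * ∑ i, x i := by rw [← Finset.mul_sum]
      rw [this]
      ring
    have hne : ((n:ℝ)+1) ≠ 0 := by positivity
    have := mul_left_cancel₀ hne key
    rw [this, ih hx]

lemma prod_shift (r : ℕ) (c : ℝ) :
    ∏ j ∈ Finset.range (r+1), (c - j) = (∏ j ∈ Finset.range r, (c - 1 - j)) * c := by
  rw [Finset.prod_range_succ']
  congr 1
  · apply Finset.prod_congr rfl
    intro j _
    push_cast
    ring
  · norm_num

lemma moment_fall {d : ℕ} (i : Fin d) (r : ℕ) : ∀ (m : ℕ) {x : Fin d → ℝ}, x ∈ simplexSet d →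
    ∑ k ∈ grid d m, (∏ j ∈ Finset.range r, ((k i:ℝ) - j)) * Pw d m k x
      = (∏ j ∈ Finset.range r, ((m:ℝ) - j)) * x i ^ r := by
  induction r with
  | zero => intro m x hx; simpa using sum_Pw m hx
  | succ r ih =>
    intro m x hx
    cases m with
    | zero =>
      rw [grid_zero_s15, Finset.sum_singleton]
      have hL : (∏ j ∈ Finset.range (r+1), (((0:ℕ):ℝ) - j)) = 0 :=
        Finset.prod_eq_zero (Finset.mem_range.mpr (Nat.succ_pos r)) (by simp)
      simp only [hL, Nat.cast_zero]
      rw [Finset.prod_eq_zero (Finset.mem_range.mpr (Nat.succ_pos r)) (by norm_num)]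
      simp
    | succ n =>
      have hpt : ∀ k : Fin d → ℕ, (∏ j ∈ Finset.range (r+1), ((k i:ℝ) - j)) * Pw d (n+1) k x
          = (k i:ℝ) * (∏ j ∈ Finset.range r, ((k i:ℝ) - 1 - j)) * Pw d (n+1) k x := by
        intro k; rw [prod_shift]; ring
      rw [Finset.sum_congr rfl (fun k _ => hpt k),
        sum_step_i i x (fun k => ∏ j ∈ Finset.range r, ((k i:ℝ) - 1 - j))]
      have hupd : ∀ k : Fin d → ℕ,
          (∏ j ∈ Finset.range r, (((Function.update k i (k i + 1)) i : ℝ) - 1 - j))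
            = ∏ j ∈ Finset.range r, ((k i:ℝ) - j) := by
        intro k
        simp only [Function.update_self]
        apply Finset.prod_congr rfl
        intro j _; push_cast; ring
      rw [Finset.sum_congr rfl (fun k _ => by rw [hupd k]), ih n hx]
      rw [show ((n+1:ℕ):ℝ) = (n:ℝ)+1 by push_cast; ring] at *
      rw [prod_shift r ((n:ℝ)+1)]
      have : (∏ j ∈ Finset.range r, ((n:ℝ) + 1 - 1 - j)) = ∏ j ∈ Finset.range r, ((n:ℝ) - j) := by
        apply Finset.prod_congr rfl; intro j _; ring
      rw [this]
      ring

lemma momA1 {d : ℕ} (i : Fin d) (m : ℕ) {x : Fin d → ℝ} (hx : x ∈ simplexSet d) :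
    ∑ k ∈ grid d m, (k i:ℝ) * Pw d m k x = (m:ℝ) * x i := by
  have h := moment_fall i 1 m hx
  simp only [Finset.prod_range_one, Nat.cast_zero, sub_zero, pow_one] at h
  exact h

lemma momA2 {d : ℕ} (i : Fin d) (m : ℕ) {x : Fin d → ℝ} (hx : x ∈ simplexSet d) :
    ∑ k ∈ grid d m, (k i:ℝ) * ((k i:ℝ) - 1) * Pw d m k x = (m:ℝ) * ((m:ℝ)-1) * x i ^ 2 := by
  have h := moment_fall i 2 m hx
  have e : ∀ c : ℝ, ∏ j ∈ Finset.range 2, (c - j) = c * (c - 1) := by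
    intro c
    rw [Finset.prod_range_succ, Finset.prod_range_one]
    push_cast; ring
  rw [Finset.sum_congr rfl (fun k _ => by rw [e ((k i:ℝ))]), e ((m:ℝ))] at h
  exact h

lemma momA3 {d : ℕ} (i : Fin d) (m : ℕ) {x : Fin d → ℝ} (hx : x ∈ simplexSet d) :
    ∑ k ∈ grid d m, (k i:ℝ) * ((k i:ℝ) - 1) * ((k i:ℝ) - 2) * Pw d m k x
      = (m:ℝ) * ((m:ℝ)-1) * ((m:ℝ)-2) * x i ^ 3 := by
  have h := moment_fall i 3 m hx
  have e : ∀ c : ℝ, ∏ j ∈ Finset.range 3, (c - j) = c * (c - 1) * (c - 2) := by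
    intro c
    rw [Finset.prod_range_succ, Finset.prod_range_succ, Finset.prod_range_one]
    push_cast; ring
  rw [Finset.sum_congr rfl (fun k _ => by rw [e ((k i:ℝ))]), e ((m:ℝ))] at h
  exact h

lemma momA4 {d : ℕ} (i : Fin d) (m : ℕ) {x : Fin d → ℝ} (hx : x ∈ simplexSet d) :
    ∑ k ∈ grid d m, (k i:ℝ) * ((k i:ℝ) - 1) * ((k i:ℝ) - 2) * ((k i:ℝ) - 3) * Pw d m k x
      = (m:ℝ) * ((m:ℝ)-1) * ((m:ℝ)-2) * ((m:ℝ)-3) * x i ^ 4 := by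
  have h := moment_fall i 4 m hx
  have e : ∀ c : ℝ, ∏ j ∈ Finset.range 4, (c - j) = c * (c - 1) * (c - 2) * (c - 3) := by
    intro c
    rw [Finset.prod_range_succ, Finset.prod_range_succ, Finset.prod_range_succ,
      Finset.prod_range_one]
    push_cast; ring
  rw [Finset.sum_congr rfl (fun k _ => by rw [e ((k i:ℝ))]), e ((m:ℝ))] at h
  exact h

lemma momMixed {d : ℕ} {i j : Fin d} (hij : i ≠ j) (m : ℕ) {x : Fin d → ℝ}
    (hx : x ∈ simplexSet d) :
    ∑ k ∈ grid d m, (k i:ℝ) * (k j:ℝ) * Pw d m k x = (m:ℝ) * ((m:ℝ)-1) * x i * x j := by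
  cases m with
  | zero =>
    rw [grid_zero_s15, Finset.sum_singleton]
    push_cast; ring
  | succ n =>
    have h := sum_step_i (n := n) i x (fun k => (k j : ℝ))
    have hupd : ∀ k : Fin d → ℕ, ((Function.update k i (k i + 1)) j : ℝ) = (k j : ℝ) := by
      intro k
      rw [Function.update_of_ne (Ne.symm hij)]
    have h2 : ∑ k ∈ grid d n, ((Function.update k i (k i + 1)) j : ℝ) * Pw d n k x
        = ∑ k ∈ grid d n, (k j:ℝ) * Pw d n k x :=
      Finset.sum_congr rfl (fun k _ => by rw [hupd k])
    rw [h2, momA1 j n hx] at h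
    rw [h]
    push_cast
    ring

lemma covPw {d : ℕ} (i j : Fin d) (m : ℕ) (hm : 1 ≤ m) {x : Fin d → ℝ}
    (hx : x ∈ simplexSet d) :
    ∑ k ∈ grid d m, ((k i:ℝ)/m - x i) * ((k j:ℝ)/m - x j) * Pw d m k x
      = (x i * (if i = j then 1 else 0) - x i * x j) / m := by
  have hM : ((m:ℝ)) ≠ 0 := by positivity
  by_cases hij : i = j
  · subst hij
    rw [if_pos rfl]
    have hpt : ∀ k : Fin d → ℕ, ((k i:ℝ)/m - x i) * ((k i:ℝ)/m - x i) * Pw d m k x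
        = (1/(m:ℝ)^2) * ((k i:ℝ) * ((k i:ℝ)-1) * Pw d m k x)
          + (1/(m:ℝ)^2 - 2*(x i)/m) * ((k i:ℝ) * Pw d m k x)
          + (x i)^2 * Pw d m k x := by
      intro k; field_simp; ring
    rw [Finset.sum_congr rfl (fun k _ => hpt k), Finset.sum_add_distrib,
      Finset.sum_add_distrib, ← Finset.mul_sum, ← Finset.mul_sum, ← Finset.mul_sum,
      momA2 i m hx, momA1 i m hx, sum_Pw m hx]
    field_simp
    ring
  · simp only [if_neg hij]
    have hpt : ∀ k : Fin d → ℕ, ((k i:ℝ)/m - x i) * ((k j:ℝ)/m - x j) * Pw d m k x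
        = (1/(m:ℝ)^2) * ((k i:ℝ) * (k j:ℝ) * Pw d m k x)
          + (-(x j)/m) * ((k i:ℝ) * Pw d m k x)
          + (-(x i)/m) * ((k j:ℝ) * Pw d m k x)
          + (x i * x j) * Pw d m k x := by
      intro k; field_simp; ring
    rw [Finset.sum_congr rfl (fun k _ => hpt k), Finset.sum_add_distrib,
      Finset.sum_add_distrib, Finset.sum_add_distrib, ← Finset.mul_sum, ← Finset.mul_sum,
      ← Finset.mul_sum, ← Finset.mul_sum,
      momMixed hij m hx, momA1 i m hx, momA1 j m hx, sum_Pw m hx]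
    field_simp
    ring

lemma m4Pw {d : ℕ} (i : Fin d) (m : ℕ) (hm : 1 ≤ m) {x : Fin d → ℝ}
    (hx : x ∈ simplexSet d) :
    ∑ k ∈ grid d m, ((k i:ℝ)/m - x i)^4 * Pw d m k x ≤ 1 / (m:ℝ)^2 := by
  have hM : ((m:ℝ)) ≠ 0 := by positivity
  have hM1 : (1:ℝ) ≤ (m:ℝ) := by exact_mod_cast hm
  set M := (m:ℝ) with hMdef
  set c := x i with hc
  have hc0 : 0 ≤ c := (hx.1 i).1
  have hc1 : c ≤ 1 := (hx.1 i).2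
  have hC4 : ∑ k ∈ grid d m, ((k i:ℝ) - M*c)^4 * Pw d m k x
      = M*c*(1-c)*(1+3*(M-2)*c*(1-c)) := by
    have hpt : ∀ k : Fin d → ℕ, ((k i:ℝ) - M*c)^4 * Pw d m k x
        = ((k i:ℝ) * ((k i:ℝ)-1) * ((k i:ℝ)-2) * ((k i:ℝ)-3) * Pw d m k x)
          + (6-4*M*c) * ((k i:ℝ) * ((k i:ℝ)-1) * ((k i:ℝ)-2) * Pw d m k x)
          + (7-12*M*c+6*M^2*c^2) * ((k i:ℝ) * ((k i:ℝ)-1) * Pw d m k x)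
          + (1-4*M*c+6*M^2*c^2-4*M^3*c^3) * ((k i:ℝ) * Pw d m k x)
          + (M^4*c^4) * Pw d m k x := by
      intro k; ring
    rw [Finset.sum_congr rfl (fun k _ => hpt k), Finset.sum_add_distrib,
      Finset.sum_add_distrib, Finset.sum_add_distrib, Finset.sum_add_distrib,
      ← Finset.mul_sum, ← Finset.mul_sum, ← Finset.mul_sum, ← Finset.mul_sum,
      momA4 i m hx, momA3 i m hx, momA2 i m hx, momA1 i m hx, sum_Pw m hx]
    ring
  have heq : ∑ k ∈ grid d m, ((k i:ℝ)/m - x i)^4 * Pw d m k x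
      = (1/M^4) * ∑ k ∈ grid d m, ((k i:ℝ) - M*c)^4 * Pw d m k x := by
    rw [Finset.mul_sum]
    apply Finset.sum_congr rfl
    intro k _
    have : ((k i:ℝ)/(m:ℝ) - x i) = ((k i:ℝ) - M*c)/M := by
      field_simp
      rw [hMdef, hc]; ring
    rw [this, div_pow]
    field_simp
  rw [heq, hC4]
  have hrw : (1:ℝ)/M^2 = (1/M^4) * M^2 := by field_simp
  rw [hrw]
  apply mul_le_mul_of_nonneg_left ?_ (by positivity : (0:ℝ) ≤ 1/M^4)
  have hq0 : 0 ≤ c*(1-c) := mul_nonneg hc0 (by linarith)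
  have hq1 : c*(1-c) ≤ 1/4 := by nlinarith [sq_nonneg (c - 1/2)]
  nlinarith [sq_nonneg (c*(1-c)), mul_le_mul_of_nonneg_left hq1 (le_of_lt (by linarith : (0:ℝ) < M)), sq_nonneg (M*(c*(1-c))), mul_le_mul hq1 hq1 hq0 (by norm_num : (0:ℝ) ≤ 1/4)]

lemma seg_norm_le {E : Type*} [NormedAddCommGroup E] [NormedSpace ℝ E] {a b y : E}
    (hy : y ∈ segment ℝ a b) : ‖y - a‖ ≤ ‖b - a‖ := by
  obtain ⟨s, t, hs, ht, hst, rfl⟩ := hy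
  have : s • a + t • b - a = t • (b - a) := by
    have hs1 : s = 1 - t := by linarith
    rw [hs1]; module
  rw [this, norm_smul]
  have : ‖b - a‖ ≤ 1 * ‖b - a‖ := by rw [one_mul]
  calc ‖t‖ * ‖b - a‖ = t * ‖b - a‖ := by rw [Real.norm_of_nonneg ht]
  _ ≤ 1 * ‖b - a‖ := by apply mul_le_mul_of_nonneg_right (by linarith) (norm_nonneg _)
  _ = ‖b - a‖ := one_mul _

lemma taylor_remainder {d : ℕ} {F : (Fin d → ℝ) → ℝ} (hF : ContDiff ℝ 2 F)
    (a b : Fin d → ℝ) (K : ℝ)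
    (hK : ∀ ξ ∈ segment ℝ a b,
      ‖fderiv ℝ (fderiv ℝ F) ξ - fderiv ℝ (fderiv ℝ F) a‖ ≤ K) :
    |F b - F a - fderiv ℝ F a (b - a)
       - (1/2) * fderiv ℝ (fderiv ℝ F) a (b - a) (b - a)| ≤ K * ‖b - a‖^2 := by
  have hdiff : Differentiable ℝ F := hF.differentiable (by norm_num)
  have hC1 : ContDiff ℝ 1 (fderiv ℝ F) := hF.fderiv_right (by norm_num)
  have hf'diff : Differentiable ℝ (fderiv ℝ F) := hC1.differentiable (by norm_num)
  set f' := fderiv ℝ F with hf'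
  set B := fderiv ℝ f' a with hB
  have hsymm : ∀ v w, B v w = B w v := fun v w =>
    second_derivative_symmetric (fun y => (hdiff y).hasFDerivAt) (hf'diff a).hasFDerivAt v w
  have hseg : Convex ℝ (segment ℝ a b) := convex_segment a b
  have hK0 : 0 ≤ K := le_trans (norm_nonneg (fderiv ℝ f' a - B)) (hK a (left_mem_segment ℝ a b))
  -- Step A : ‖f' y - f' a - B (y-a)‖ ≤ K ‖y - a‖ on the segment
  have stepA : ∀ y ∈ segment ℝ a b, ‖f' y - f' a - B (y - a)‖ ≤ K * ‖y - a‖ := by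
    intro y hy
    have hψ : ∀ z ∈ segment ℝ a b, HasFDerivWithinAt (fun z => f' z - B (z - a))
        (fderiv ℝ f' z - B) (segment ℝ a b) z := by
      intro z hz
      have h1 : HasFDerivAt f' (fderiv ℝ f' z) z := (hf'diff z).hasFDerivAt
      have h2 : HasFDerivAt (fun z : Fin d → ℝ => B (z - a)) B z := by
        have h3 : HasFDerivAt (fun z : Fin d → ℝ => z - a)
            (ContinuousLinearMap.id ℝ (Fin d → ℝ)) z := (hasFDerivAt_id z).sub_const a
        have := B.hasFDerivAt.comp z h3
        simpa [Function.comp_def, -map_sub] using this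
      exact (h1.sub h2).hasFDerivWithinAt
    have hbound : ∀ z ∈ segment ℝ a b, ‖fderiv ℝ f' z - B‖ ≤ K := fun z hz => hK z hz
    have := hseg.norm_image_sub_le_of_norm_hasFDerivWithin_le hψ hbound
      (left_mem_segment ℝ a b) hy
    simp only [sub_self, map_zero] at this
    calc ‖f' y - f' a - B (y - a)‖ = ‖f' y - B (y - a) - (f' a - 0)‖ := by
          congr 1; abel
    _ ≤ K * ‖y - a‖ := this
  -- Step B
  have hφderiv : ∀ y ∈ segment ℝ a b,
      HasFDerivWithinAt (fun y => F y - f' a (y - a) - (1/2) * B (y - a) (y - a))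
        (f' y - f' a - B (y - a)) (segment ℝ a b) y := by
    intro y hy
    have h1 : HasFDerivAt F (f' y) y := (hdiff y).hasFDerivAt
    have hid : HasFDerivAt (fun z : Fin d → ℝ => z - a)
        (ContinuousLinearMap.id ℝ (Fin d → ℝ)) y := (hasFDerivAt_id y).sub_const a
    have h2 : HasFDerivAt (fun z : Fin d → ℝ => f' a (z - a)) (f' a) y := by
      have := (f' a).hasFDerivAt.comp y hid
      simpa [Function.comp_def, -map_sub] using this
    have hc : HasFDerivAt (fun z : Fin d → ℝ => B (z - a)) B y := by
      have := B.hasFDerivAt.comp y hid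
      simpa [Function.comp_def, -map_sub] using this
    have h3 : HasFDerivAt (fun z : Fin d → ℝ => B (z - a) (z - a))
        ((B (y - a)).comp (ContinuousLinearMap.id ℝ (Fin d → ℝ)) + B.flip (y - a)) y := by
      exact hc.clm_apply hid
    have h4 : HasFDerivAt (fun z : Fin d → ℝ => (1/2) * (B (z - a) (z - a)))
        ((1/2 : ℝ) • ((B (y - a)).comp (ContinuousLinearMap.id ℝ (Fin d → ℝ)) + B.flip (y - a))) y :=
      h3.const_mul (1/2)
    have hflip : B.flip (y - a) = B (y - a) := by
      ext v
      exact hsymm v (y - a)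
    have hhalf : ((1/2 : ℝ) • ((B (y - a)).comp (ContinuousLinearMap.id ℝ (Fin d → ℝ))
        + B.flip (y - a))) = B (y - a) := by
      rw [hflip, ContinuousLinearMap.comp_id]
      ext v
      simp
      ring
    rw [hhalf] at h4
    exact ((h1.sub h2).sub h4).hasFDerivWithinAt
  have hφbound : ∀ y ∈ segment ℝ a b, ‖f' y - f' a - B (y - a)‖ ≤ K * ‖b - a‖ := by
    intro y hy
    calc ‖f' y - f' a - B (y - a)‖ ≤ K * ‖y - a‖ := stepA y hy
    _ ≤ K * ‖b - a‖ := mul_le_mul_of_nonneg_left (seg_norm_le hy) hK0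
  have hMVT := hseg.norm_image_sub_le_of_norm_hasFDerivWithin_le hφderiv hφbound
    (left_mem_segment ℝ a b) (right_mem_segment ℝ a b)
  simp only [sub_self, map_zero, mul_zero, sub_zero] at hMVT
  rw [← Real.norm_eq_abs]
  calc ‖F b - F a - f' a (b - a) - (1/2) * B (b - a) (b - a)‖
      = ‖F b - f' a (b - a) - (1/2) * (B (b - a)) (b - a) - F a‖ := by
        congr 1; ring
  _ ≤ K * ‖b - a‖ * ‖b - a‖ := hMVT
  _ = K * ‖b - a‖^2 := by ring


lemma simplex_convex {d : ℕ} : Convex ℝ (simplexSet d) := by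
  intro x hx y hy s t hs ht hst
  obtain ⟨hx1, hx2⟩ := hx
  obtain ⟨hy1, hy2⟩ := hy
  constructor
  · intro i
    have h1 := (hx1 i).1; have h2 := (hx1 i).2
    have h3 := (hy1 i).1; have h4 := (hy1 i).2
    constructor
    · have : (s • x + t • y) i = s * x i + t * y i := rfl
      rw [this]; nlinarith
    · have : (s • x + t • y) i = s * x i + t * y i := rfl
      rw [this]; nlinarith
  · have : ∑ i, (s • x + t • y) i = s * ∑ i, x i + t * ∑ i, y i := by
      rw [Finset.mul_sum, Finset.mul_sum, ← Finset.sum_add_distrib]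
      rfl
    rw [this]; nlinarith

lemma simplex_closed {d : ℕ} : IsClosed (simplexSet d) := by
  have h1 : IsClosed {x : Fin d → ℝ | ∑ i, x i ≤ 1} :=
    isClosed_le (by continuity) continuous_const
  have h2 : ∀ i : Fin d, IsClosed {x : Fin d → ℝ | 0 ≤ x i} := fun i =>
    isClosed_le continuous_const (continuous_apply i)
  have h3 : ∀ i : Fin d, IsClosed {x : Fin d → ℝ | x i ≤ 1} := fun i =>
    isClosed_le (continuous_apply i) continuous_const
  have : simplexSet d = (⋂ i, ({x : Fin d → ℝ | 0 ≤ x i} ∩ {x | x i ≤ 1}))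
      ∩ {x : Fin d → ℝ | ∑ i, x i ≤ 1} := by
    ext x
    simp only [simplexSet, Set.mem_setOf_eq, Set.mem_inter_iff, Set.mem_iInter,
      Set.mem_setOf_eq]
    try tauto
  rw [this]
  exact (isClosed_iInter fun i => (h2 i).inter (h3 i)).inter h1

lemma simplex_compact {d : ℕ} : IsCompact (simplexSet d) := by
  have hsub : simplexSet d ⊆ Set.Icc (fun _ => 0) (fun _ => 1) := by
    intro x hx
    constructor
    · intro i; exact (hx.1 i).1
    · intro i; exact (hx.1 i).2
  exact (isCompact_Icc).of_isClosed_subset simplex_closed hsub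

lemma pi_single_expand {d : ℕ} (u : Fin d → ℝ) : u = ∑ i, u i • (Pi.single i 1 : Fin d → ℝ) := by
  funext j
  rw [Finset.sum_apply]
  have : ∀ i, (u i • (Pi.single i 1 : Fin d → ℝ)) j = if j = i then u i else 0 := by
    intro i
    by_cases h : j = i
    · subst h; simp
    · simp [Pi.single_apply, h]
  rw [Finset.sum_congr rfl (fun i _ => this i)]
  simp

lemma lin_expand {d : ℕ} (L : (Fin d → ℝ) →L[ℝ] ℝ) (u : Fin d → ℝ) :
    L u = ∑ i, u i * L (Pi.single i 1) := by
  conv_lhs => rw [pi_single_expand u]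
  rw [map_sum]
  apply Finset.sum_congr rfl
  intro i _
  rw [_root_.map_smul, smul_eq_mul]

lemma bilin_expand {d : ℕ} (B : (Fin d → ℝ) →L[ℝ] (Fin d → ℝ) →L[ℝ] ℝ) (u : Fin d → ℝ) :
    B u u = ∑ i, ∑ j, u i * u j * B (Pi.single i 1) (Pi.single j 1) := by
  have h1 : B u = ∑ i, u i • B (Pi.single i 1) := by
    conv_lhs => rw [pi_single_expand u]
    rw [map_sum]
    apply Finset.sum_congr rfl
    intro i _
    rw [_root_.map_smul]
  rw [h1, ContinuousLinearMap.sum_apply]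
  apply Finset.sum_congr rfl
  intro i _
  rw [ContinuousLinearMap.smul_apply, smul_eq_mul, lin_expand (B (Pi.single i 1)) u,
    Finset.mul_sum]
  apply Finset.sum_congr rfl
  intro j _
  ring

-- new lemmas
lemma cent1 {d : ℕ} (i : Fin d) (m : ℕ) (hm : 1 ≤ m) {x : Fin d → ℝ}
    (hx : x ∈ simplexSet d) :
    ∑ k ∈ grid d m, ((k i:ℝ)/m - x i) * Pw d m k x = 0 := by
  have hm0 : ((m:ℝ)) ≠ 0 := by positivity
  have hpt : ∀ k : Fin d → ℕ, ((k i:ℝ)/m - x i) * Pw d m k x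
      = (1/(m:ℝ)) * ((k i:ℝ) * Pw d m k x) + (- x i) * Pw d m k x := by
    intro k; field_simp; ring
  rw [Finset.sum_congr rfl (fun k _ => hpt k), Finset.sum_add_distrib, ← Finset.mul_sum,
    ← Finset.mul_sum, momA1 i m hx, sum_Pw m hx]
  field_simp
  ring

lemma grid_mem_simplex {d m : ℕ} {k : Fin d → ℕ} (hk : k ∈ grid d m) (hm : 1 ≤ m) :
    (fun i => (k i:ℝ)/m) ∈ simplexSet d := by
  have hs := mem_grid.mp hk
  have hm0 : (0:ℝ) < m := by exact_mod_cast hm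
  constructor
  · intro i
    have hki : k i ≤ m :=
      le_trans (Finset.single_le_sum (f := k) (fun j _ => Nat.zero_le _) (Finset.mem_univ i)) hs
    constructor
    · positivity
    · rw [div_le_one hm0]; exact_mod_cast hki
  · rw [← Finset.sum_div, div_le_one hm0]
    exact_mod_cast hs

lemma secondPartial_eq {d : ℕ} {F : (Fin d → ℝ) → ℝ} (hF : ContDiff ℝ 2 F)
    (i j : Fin d) (x : Fin d → ℝ) :
    secondPartial d F i j x
      = fderiv ℝ (fderiv ℝ F) x (Pi.single i 1) (Pi.single j 1) := by
  have hC1 : ContDiff ℝ 1 (fderiv ℝ F) := hF.fderiv_right (by norm_num)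
  have hf'diff : Differentiable ℝ (fderiv ℝ F) := hC1.differentiable (by norm_num)
  unfold secondPartial
  have h := fderiv_clm_apply (c := fun y => fderiv ℝ F y)
    (u := fun _ => (Pi.single j 1 : Fin d → ℝ)) (hf'diff x) (differentiableAt_const _)
  rw [h]
  simp

lemma key_identity {d : ℕ} {F : (Fin d → ℝ) → ℝ} (hF : ContDiff ℝ 2 F) (m : ℕ) (hm : 1 ≤ m)
    {x : Fin d → ℝ} (hx : x ∈ simplexSet d) :
    bernsteinPoly d m F x - F x - biasB d F x / m
      = ∑ k ∈ grid d m, (F (fun i => (k i:ℝ)/m) - F x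
          - fderiv ℝ F x ((fun i => (k i:ℝ)/m) - x)
          - (1/2) * fderiv ℝ (fderiv ℝ F) x ((fun i => (k i:ℝ)/m) - x) ((fun i => (k i:ℝ)/m) - x))
          * Pw d m k x := by
  have hsub : ∀ (k : Fin d → ℕ) (i : Fin d),
      ((fun i => (k i:ℝ)/m) - x) i = (k i:ℝ)/m - x i := fun k i => rfl
  -- gradient term vanishes
  have hgrad : ∑ k ∈ grid d m, (fderiv ℝ F x ((fun i => (k i:ℝ)/m) - x)) * Pw d m k x = 0 := by
    have hpt : ∀ k : Fin d → ℕ, (fderiv ℝ F x ((fun i => (k i:ℝ)/m) - x)) * Pw d m k x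
        = ∑ i, (fderiv ℝ F x (Pi.single i 1)) * (((k i:ℝ)/m - x i) * Pw d m k x) := by
      intro k
      rw [lin_expand (fderiv ℝ F x) ((fun i => (k i:ℝ)/m) - x), Finset.sum_mul]
      apply Finset.sum_congr rfl
      intro i _
      rw [hsub]
      ring
    rw [Finset.sum_congr rfl (fun k _ => hpt k), Finset.sum_comm]
    apply Finset.sum_eq_zero
    intro i _
    rw [← Finset.mul_sum, cent1 i m hm hx, mul_zero]
  -- quadratic term gives the bias
  have hquad : ∑ k ∈ grid d m,
      ((1/2) * fderiv ℝ (fderiv ℝ F) x ((fun i => (k i:ℝ)/m) - x) ((fun i => (k i:ℝ)/m) - x))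
        * Pw d m k x = biasB d F x / m := by
    have hpt : ∀ k : Fin d → ℕ,
        ((1/2) * fderiv ℝ (fderiv ℝ F) x ((fun i => (k i:ℝ)/m) - x) ((fun i => (k i:ℝ)/m) - x))
          * Pw d m k x
        = ∑ i, ∑ j, ((1/2) * (fderiv ℝ (fderiv ℝ F) x (Pi.single i 1) (Pi.single j 1)))
            * (((k i:ℝ)/m - x i) * ((k j:ℝ)/m - x j) * Pw d m k x) := by
      intro k
      rw [bilin_expand (fderiv ℝ (fderiv ℝ F) x) ((fun i => (k i:ℝ)/m) - x), Finset.mul_sum,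
        Finset.sum_mul]
      apply Finset.sum_congr rfl
      intro i _
      rw [Finset.mul_sum, Finset.sum_mul]
      apply Finset.sum_congr rfl
      intro j _
      rw [hsub, hsub]
      ring
    rw [Finset.sum_congr rfl (fun k _ => hpt k), Finset.sum_comm]
    rw [Finset.sum_congr rfl (fun i (_ : i ∈ Finset.univ) => Finset.sum_comm)]
    have hinner : ∀ i j : Fin d,
        ∑ k ∈ grid d m, ((1/2) * (fderiv ℝ (fderiv ℝ F) x (Pi.single i 1) (Pi.single j 1)))
            * (((k i:ℝ)/m - x i) * ((k j:ℝ)/m - x j) * Pw d m k x)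
          = ((1/2) * (fderiv ℝ (fderiv ℝ F) x (Pi.single i 1) (Pi.single j 1)))
            * ((x i * (if i = j then 1 else 0) - x i * x j) / m) := by
      intro i j
      rw [← Finset.mul_sum, covPw i j m hm hx]
    rw [Finset.sum_congr rfl (fun i (_ : i ∈ Finset.univ) =>
      Finset.sum_congr rfl (fun j (_ : j ∈ Finset.univ) => hinner i j))]
    unfold biasB
    rw [Finset.mul_sum, Finset.sum_div]
    apply Finset.sum_congr rfl
    intro i _
    rw [Finset.mul_sum, Finset.sum_div]
    apply Finset.sum_congr rfl
    intro j _
    rw [secondPartial_eq hF i j x]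
    field_simp
  -- combine
  have hexp : ∀ k : Fin d → ℕ, (F (fun i => (k i:ℝ)/m) - F x
          - fderiv ℝ F x ((fun i => (k i:ℝ)/m) - x)
          - (1/2) * fderiv ℝ (fderiv ℝ F) x ((fun i => (k i:ℝ)/m) - x) ((fun i => (k i:ℝ)/m) - x))
          * Pw d m k x
      = F (fun i => (k i:ℝ)/m) * Pw d m k x - F x * Pw d m k x
        - (fderiv ℝ F x ((fun i => (k i:ℝ)/m) - x)) * Pw d m k x
        - ((1/2) * fderiv ℝ (fderiv ℝ F) x ((fun i => (k i:ℝ)/m) - x) ((fun i => (k i:ℝ)/m) - x))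
            * Pw d m k x := by
    intro k; ring
  rw [Finset.sum_congr rfl (fun k _ => hexp k), Finset.sum_sub_distrib, Finset.sum_sub_distrib,
    Finset.sum_sub_distrib, hgrad, hquad, ← Finset.mul_sum, sum_Pw m hx, mul_one]
  unfold bernsteinPoly
  ring

/-- Second-order uniform approximation by Bernstein polynomials on the simplex:
`F_m⋆(x) = F(x) + m⁻¹ B(x) + o(m⁻¹)` uniformly in x. -/
theorem bernstein_poly_second_order (d : ℕ) (hd : 1 ≤ d)
    (F : (Fin d → ℝ) → ℝ) (hF : ContDiff ℝ 2 F) :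
    ∀ ε > (0 : ℝ), ∃ M : ℕ, ∀ m : ℕ, M ≤ m → ∀ x ∈ simplexSet d,
      (m : ℝ) * |bernsteinPoly d m F x - F x - biasB d F x / m| ≤ ε := by
  intro ε hε
  have hC1 : ContDiff ℝ 1 (fderiv ℝ F) := hF.fderiv_right (by norm_num)
  have hf''cont : Continuous (fderiv ℝ (fderiv ℝ F)) := hC1.continuous_fderiv (by norm_num)
  obtain ⟨C₀, hC₀⟩ := IsCompact.exists_bound_of_continuousOn (f := fderiv ℝ (fderiv ℝ F)) simplex_compact
    hf''cont.continuousOn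
  set C := max C₀ 0 with hCdef
  have hC0 : (0:ℝ) ≤ C := le_max_right _ _
  have hCb : ∀ y ∈ simplexSet d, ‖fderiv ℝ (fderiv ℝ F) y‖ ≤ C :=
    fun y hy => le_trans (hC₀ y hy) (le_max_left _ _)
  have hd0 : (0:ℝ) < d := by exact_mod_cast hd
  have hε₁ : (0:ℝ) < ε / (2*d) := by positivity
  obtain ⟨δ, hδ0, hδ⟩ := (Metric.uniformContinuousOn_iff (f := fderiv ℝ (fderiv ℝ F))
      (s := simplexSet d)).mp
    (IsCompact.uniformContinuousOn_of_continuous (f := fderiv ℝ (fderiv ℝ F)) simplex_compact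
      hf''cont.continuousOn) (ε/(2*d)) hε₁
  refine ⟨max 1 (Nat.ceil (16*C*(d:ℝ)^2/(δ^2*ε))), ?_⟩
  intro m hm x hx
  have hm1 : 1 ≤ m := le_trans (le_max_left _ _) hm
  have hm0 : (0:ℝ) < m := by exact_mod_cast hm1
  have hmceil : (16*C*(d:ℝ)^2/(δ^2*ε)) ≤ m := by
    have h := le_trans (le_max_right 1 (Nat.ceil (16*C*(d:ℝ)^2/(δ^2*ε)))) hm
    calc (16*C*(d:ℝ)^2/(δ^2*ε)) ≤ (Nat.ceil (16*C*(d:ℝ)^2/(δ^2*ε)) : ℝ) := Nat.le_ceil _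
    _ ≤ m := by exact_mod_cast h
  have hRbound : ∀ k ∈ grid d m,
      |F (fun i => (k i:ℝ)/m) - F x - fderiv ℝ F x ((fun i => (k i:ℝ)/m) - x)
        - (1/2) * fderiv ℝ (fderiv ℝ F) x ((fun i => (k i:ℝ)/m) - x) ((fun i => (k i:ℝ)/m) - x)|
      ≤ (ε/(2*d)) * (∑ i, ((k i:ℝ)/m - x i)^2)
        + (8*C/δ^2) * (∑ i, ((k i:ℝ)/m - x i)^2)^2 := by
    intro k hk
    set q := ∑ i, ((k i:ℝ)/m - x i)^2 with hqdef
    have hq0 : 0 ≤ q := Finset.sum_nonneg fun i _ => sq_nonneg _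
    have hbS : (fun i => (k i:ℝ)/m) ∈ simplexSet d := grid_mem_simplex hk hm1
    have hsegS : segment ℝ x (fun i => (k i:ℝ)/m) ⊆ simplexSet d :=
      simplex_convex.segment_subset hx hbS
    have hsub : ∀ i : Fin d, ((fun i => (k i:ℝ)/m) - x) i = (k i:ℝ)/m - x i := fun i => rfl
    have hnorm : ‖(fun i => (k i:ℝ)/m) - x‖ ≤ Real.sqrt q := by
      rw [pi_norm_le_iff_of_nonneg (Real.sqrt_nonneg _)]
      intro i
      rw [hsub i, Real.norm_eq_abs, ← Real.sqrt_sq_eq_abs]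
      apply Real.sqrt_le_sqrt
      exact Finset.single_le_sum (f := fun i => ((k i:ℝ)/m - x i)^2)
        (fun i _ => sq_nonneg _) (Finset.mem_univ i)
    have hnorm2 : ‖(fun i => (k i:ℝ)/m) - x‖^2 ≤ q := by
      calc ‖(fun i => (k i:ℝ)/m) - x‖^2 ≤ (Real.sqrt q)^2 := by
            apply pow_le_pow_left₀ (norm_nonneg _) hnorm
      _ = q := Real.sq_sqrt hq0
    by_cases hcase : q ≤ δ^2/4
    · have hKseg : ∀ ξ ∈ segment ℝ x (fun i => (k i:ℝ)/m),
          ‖fderiv ℝ (fderiv ℝ F) ξ - fderiv ℝ (fderiv ℝ F) x‖ ≤ ε/(2*d) := by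
        intro ξ hξ
        have hξS := hsegS hξ
        have hdist : dist ξ x < δ := by
          rw [dist_eq_norm]
          calc ‖ξ - x‖ ≤ ‖(fun i => (k i:ℝ)/m) - x‖ := seg_norm_le hξ
          _ ≤ Real.sqrt q := hnorm
          _ ≤ Real.sqrt (δ^2/4) := Real.sqrt_le_sqrt hcase
          _ = δ/2 := by rw [show δ^2/4 = (δ/2)^2 by ring, Real.sqrt_sq (by positivity)]
          _ < δ := by linarith
        have h := hδ ξ hξS x hx hdist
        rw [dist_eq_norm (fderiv ℝ (fderiv ℝ F) ξ) (fderiv ℝ (fderiv ℝ F) x)] at h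
        exact le_of_lt h
      have htay := taylor_remainder hF x (fun i => (k i:ℝ)/m) (ε/(2*d)) hKseg
      calc |F (fun i => (k i:ℝ)/m) - F x - fderiv ℝ F x ((fun i => (k i:ℝ)/m) - x)
            - (1/2) * fderiv ℝ (fderiv ℝ F) x ((fun i => (k i:ℝ)/m) - x) ((fun i => (k i:ℝ)/m) - x)|
          ≤ (ε/(2*d)) * ‖(fun i => (k i:ℝ)/m) - x‖^2 := htay
      _ ≤ (ε/(2*d)) * q := mul_le_mul_of_nonneg_left hnorm2 (le_of_lt hε₁)
      _ ≤ (ε/(2*d)) * q + (8*C/δ^2) * q^2 := le_add_of_nonneg_right (by positivity)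
    · push_neg at hcase
      have hKseg : ∀ ξ ∈ segment ℝ x (fun i => (k i:ℝ)/m),
          ‖fderiv ℝ (fderiv ℝ F) ξ - fderiv ℝ (fderiv ℝ F) x‖ ≤ 2*C := by
        intro ξ hξ
        calc ‖fderiv ℝ (fderiv ℝ F) ξ - fderiv ℝ (fderiv ℝ F) x‖
            ≤ ‖fderiv ℝ (fderiv ℝ F) ξ‖ + ‖fderiv ℝ (fderiv ℝ F) x‖ := norm_sub_le (fderiv ℝ (fderiv ℝ F) ξ) (fderiv ℝ (fderiv ℝ F) x)
        _ ≤ C + C := add_le_add (hCb ξ (hsegS hξ)) (hCb x hx)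
        _ = 2*C := by ring
      have htay := taylor_remainder hF x (fun i => (k i:ℝ)/m) (2*C) hKseg
      have hq' : q ≤ (4/δ^2) * q^2 := by
        have hδ2 : 0 < δ^2 := by positivity
        rw [div_mul_eq_mul_div, le_div_iff₀ hδ2]
        nlinarith [mul_le_mul_of_nonneg_left (le_of_lt hcase) hq0]
      calc |F (fun i => (k i:ℝ)/m) - F x - fderiv ℝ F x ((fun i => (k i:ℝ)/m) - x)
            - (1/2) * fderiv ℝ (fderiv ℝ F) x ((fun i => (k i:ℝ)/m) - x) ((fun i => (k i:ℝ)/m) - x)|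
          ≤ (2*C) * ‖(fun i => (k i:ℝ)/m) - x‖^2 := htay
      _ ≤ (2*C) * q := mul_le_mul_of_nonneg_left hnorm2 (by positivity)
      _ ≤ (2*C) * ((4/δ^2) * q^2) := mul_le_mul_of_nonneg_left hq' (by positivity)
      _ = (8*C/δ^2) * q^2 := by ring
      _ ≤ (ε/(2*d)) * q + (8*C/δ^2) * q^2 := le_add_of_nonneg_left (by positivity)
  have habs : |bernsteinPoly d m F x - F x - biasB d F x / m|
      ≤ (ε/(2*d)) * (∑ k ∈ grid d m, (∑ i, ((k i:ℝ)/m - x i)^2) * Pw d m k x)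
        + (8*C/δ^2) * (∑ k ∈ grid d m, (∑ i, ((k i:ℝ)/m - x i)^2)^2 * Pw d m k x) := by
    rw [key_identity hF m hm1 hx]
    calc |∑ k ∈ grid d m, (F (fun i => (k i:ℝ)/m) - F x
          - fderiv ℝ F x ((fun i => (k i:ℝ)/m) - x)
          - (1/2) * fderiv ℝ (fderiv ℝ F) x ((fun i => (k i:ℝ)/m) - x) ((fun i => (k i:ℝ)/m) - x))
          * Pw d m k x|
        ≤ ∑ k ∈ grid d m, |(F (fun i => (k i:ℝ)/m) - F x
          - fderiv ℝ F x ((fun i => (k i:ℝ)/m) - x)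
          - (1/2) * fderiv ℝ (fderiv ℝ F) x ((fun i => (k i:ℝ)/m) - x) ((fun i => (k i:ℝ)/m) - x))
          * Pw d m k x| := Finset.abs_sum_le_sum_abs _ _
    _ ≤ ∑ k ∈ grid d m, ((ε/(2*d)) * (∑ i, ((k i:ℝ)/m - x i)^2)
          + (8*C/δ^2) * (∑ i, ((k i:ℝ)/m - x i)^2)^2) * Pw d m k x := by
        apply Finset.sum_le_sum
        intro k hk
        rw [abs_mul, abs_of_nonneg (Pw_nonneg hx)]
        exact mul_le_mul_of_nonneg_right (hRbound k hk) (Pw_nonneg hx)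
    _ = (ε/(2*d)) * (∑ k ∈ grid d m, (∑ i, ((k i:ℝ)/m - x i)^2) * Pw d m k x)
        + (8*C/δ^2) * (∑ k ∈ grid d m, (∑ i, ((k i:ℝ)/m - x i)^2)^2 * Pw d m k x) := by
        rw [Finset.mul_sum, Finset.mul_sum, ← Finset.sum_add_distrib]
        apply Finset.sum_congr rfl
        intro k _
        ring
  have hq1sum : ∑ k ∈ grid d m, (∑ i, ((k i:ℝ)/m - x i)^2) * Pw d m k x
      ≤ (d:ℝ)/(4*(m:ℝ)) := by
    rw [Finset.sum_congr rfl (fun k (_ : k ∈ grid d m) =>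
      Finset.sum_mul Finset.univ (fun i => ((k i:ℝ)/m - x i)^2) (Pw d m k x)), Finset.sum_comm]
    have hii : ∀ i : Fin d, ∑ k ∈ grid d m, ((k i:ℝ)/m - x i)^2 * Pw d m k x
        = (x i * 1 - x i * x i)/m := by
      intro i
      have hcov := covPw i i m hm1 hx
      rw [if_pos rfl] at hcov
      rw [Finset.sum_congr rfl (fun k (_ : k ∈ grid d m) => by rw [sq])]
      exact hcov
    rw [Finset.sum_congr rfl (fun i (_ : i ∈ Finset.univ) => hii i)]
    calc ∑ i : Fin d, (x i * 1 - x i * x i)/m ≤ ∑ i : Fin d, (1:ℝ)/(4*(m:ℝ)) := by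
          apply Finset.sum_le_sum
          intro i _
          rw [div_le_div_iff₀ hm0 (by positivity)]
          have h1 := (hx.1 i).1
          have h2 := (hx.1 i).2
          nlinarith [mul_nonneg hm0.le (sq_nonneg (2*x i - 1))]
    _ = (d:ℝ)/(4*(m:ℝ)) := by
          rw [Finset.sum_const, Finset.card_univ, Fintype.card_fin, nsmul_eq_mul]
          ring
  have hq2sum : ∑ k ∈ grid d m, (∑ i, ((k i:ℝ)/m - x i)^2)^2 * Pw d m k x
      ≤ (d:ℝ)^2/(m:ℝ)^2 := by
    have hpt : ∀ k ∈ grid d m, (∑ i, ((k i:ℝ)/m - x i)^2)^2 * Pw d m k x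
        ≤ (d:ℝ) * (∑ i, ((k i:ℝ)/m - x i)^4) * Pw d m k x := by
      intro k _
      apply mul_le_mul_of_nonneg_right _ (Pw_nonneg hx)
      have h := sq_sum_le_card_mul_sum_sq (s := Finset.univ)
        (f := fun i => ((k i:ℝ)/m - x i)^2)
      simp only [Finset.card_univ, Fintype.card_fin] at h
      calc (∑ i, ((k i:ℝ)/m - x i)^2)^2 ≤ (d:ℝ) * ∑ i, (((k i:ℝ)/m - x i)^2)^2 := h
      _ = (d:ℝ) * ∑ i, ((k i:ℝ)/m - x i)^4 := by
          congr 1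
          apply Finset.sum_congr rfl
          intro i _
          ring
    calc ∑ k ∈ grid d m, (∑ i, ((k i:ℝ)/m - x i)^2)^2 * Pw d m k x
        ≤ ∑ k ∈ grid d m, (d:ℝ) * (∑ i, ((k i:ℝ)/m - x i)^4) * Pw d m k x :=
          Finset.sum_le_sum hpt
    _ = (d:ℝ) * ∑ i, ∑ k ∈ grid d m, ((k i:ℝ)/m - x i)^4 * Pw d m k x := by
        have hptk : ∀ k : Fin d → ℕ, (d:ℝ) * (∑ i, ((k i:ℝ)/m - x i)^4) * Pw d m k x
            = ∑ i, (d:ℝ) * (((k i:ℝ)/m - x i)^4 * Pw d m k x) := by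
          intro k
          rw [mul_assoc, Finset.sum_mul, Finset.mul_sum]
        rw [Finset.sum_congr rfl (fun k (_ : k ∈ grid d m) => hptk k), Finset.sum_comm,
          Finset.mul_sum]
        apply Finset.sum_congr rfl
        intro i _
        rw [Finset.mul_sum]
    _ ≤ (d:ℝ) * ∑ i : Fin d, 1/(m:ℝ)^2 := by
        apply mul_le_mul_of_nonneg_left _ (le_of_lt hd0)
        exact Finset.sum_le_sum (fun i _ => m4Pw i m hm1 hx)
    _ = (d:ℝ)^2/(m:ℝ)^2 := by
        rw [Finset.sum_const, Finset.card_univ, Fintype.card_fin, nsmul_eq_mul]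
        ring
  have hfar : 8*C*(d:ℝ)^2/(δ^2*m) ≤ ε/2 := by
    have h1 : 16*C*(d:ℝ)^2 ≤ m * (δ^2*ε) := by
      rw [div_le_iff₀ (by positivity)] at hmceil
      linarith
    rw [div_le_div_iff₀ (by positivity) (by norm_num)]
    nlinarith
  calc (m:ℝ) * |bernsteinPoly d m F x - F x - biasB d F x / m|
      ≤ (m:ℝ) * ((ε/(2*d)) * ((d:ℝ)/(4*(m:ℝ))) + (8*C/δ^2) * ((d:ℝ)^2/(m:ℝ)^2)) := by
        apply mul_le_mul_of_nonneg_left _ (le_of_lt hm0)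
        exact le_trans habs (add_le_add
          (mul_le_mul_of_nonneg_left hq1sum (le_of_lt hε₁))
          (mul_le_mul_of_nonneg_left hq2sum (by positivity)))
  _ = ε/8 + 8*C*(d:ℝ)^2/(δ^2*m) := by
        field_simp
        ring
  _ ≤ ε/8 + ε/2 := by linarith
  _ ≤ ε := by linarith
end
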